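/- If H ⊑ H' and both H and H' are sequential histories of the same length, and each operation identifier occurs exactly once as an invocation immediately followed by its matching response, then the happened-before order on operations in H equals that in H'; in particular if the happened-before order on operations of H is total, then H = H'. -/
import Mathlib


structure Event where
  thr : ℕ
  op : ℕ
  isInv : Bool
deriving DecidableEq

abbrev History := List Event

/-- Projection of a history to the events of thread `t`. -/
def proj (H : History) (t : ℕ) : History := H.filter (fun e => e.thr = t)

/-- The linearizability relation on histories. -/
def Lin (H H' : History) : Prop :=
  (∀ t, proj H t = proj H' t) ∧
  ∃ ν : Fin H.length ≃ Fin H'.length,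
    (∀ i, H.get i = H'.get (ν i)) ∧
    ∀ i j : Fin H.length, (i : ℕ) < (j : ℕ) →
      (H.get i).isInv = false → (H.get j).isInv = true →
      ((ν i : ℕ) < ((ν j : ℕ)))

/-- Operation `o` happens before `o'` in `H`: some response event of `o`
precedes some invocation event of `o'`. -/
def hb (H : History) (o o' : ℕ) : Prop :=
  ∃ i j : Fin H.length, (i : ℕ) < (j : ℕ) ∧
    (H.get i).op = o ∧ (H.get i).isInv = false ∧
    (H.get j).op = o' ∧ (H.get j).isInv = true

/-- `o` is an operation occurring in `H`. -/
def opOf (H : History) (o : ℕ) : Prop := ∃ i : Fin H.length, (H.get i).op = o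

/-- A complete sequential history: even length, events alternate
invocation / matching response, and operation identifiers are distinct. -/
def SeqHist (H : History) : Prop :=
  (∃ n, H.length = 2 * n) ∧
  (∀ (k : ℕ) (h1 : 2 * k < H.length) (h2 : 2 * k + 1 < H.length),
    (H.get ⟨2 * k, h1⟩).isInv = true ∧ (H.get ⟨2 * k + 1, h2⟩).isInv = false ∧
    (H.get ⟨2 * k, h1⟩).op = (H.get ⟨2 * k + 1, h2⟩).op) ∧
  (∀ i j : Fin H.length, (H.get i).op = (H.get j).op →
    (H.get i).isInv = (H.get j).isInv → i = j)

lemma seq_isInv_even {H : History} (hs : SeqHist H) (i : Fin H.length)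
    (h : (i : ℕ) % 2 = 0) : (H.get i).isInv = true := by
  obtain ⟨⟨n, hn⟩, halt, _⟩ := hs
  have hlt := i.isLt
  have h1 : 2 * ((i : ℕ) / 2) < H.length := by omega
  have h2 : 2 * ((i : ℕ) / 2) + 1 < H.length := by omega
  have hi : i = ⟨2 * ((i : ℕ) / 2), h1⟩ := Fin.ext (by simp only [Fin.val_mk]; omega)
  rw [hi]
  exact (halt _ h1 h2).1

lemma seq_isInv_odd {H : History} (hs : SeqHist H) (i : Fin H.length)
    (h : (i : ℕ) % 2 = 1) : (H.get i).isInv = false := by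
  obtain ⟨⟨n, hn⟩, halt, _⟩ := hs
  have hlt := i.isLt
  have h1 : 2 * ((i : ℕ) / 2) < H.length := by omega
  have h2 : 2 * ((i : ℕ) / 2) + 1 < H.length := by omega
  have hi : i = ⟨2 * ((i : ℕ) / 2) + 1, h2⟩ := Fin.ext (by simp only [Fin.val_mk]; omega)
  rw [hi]
  exact (halt _ h1 h2).2.1

/-- In a sequential history, a response event with the same operation as an
invocation event sits immediately after it. -/
lemma seq_resp_succ {H : History} (hs : SeqHist H) (p q : Fin H.length)
    (hop : (H.get p).op = (H.get q).op)
    (hp : (H.get p).isInv = true) (hq : (H.get q).isInv = false) :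
    (q : ℕ) = (p : ℕ) + 1 := by
  obtain ⟨⟨n, hn⟩, halt, huniq⟩ := hs
  have hq2 : (q : ℕ) % 2 = 1 := by
    by_contra hc
    have h0 : (q : ℕ) % 2 = 0 := by omega
    have := seq_isInv_even ⟨⟨n, hn⟩, halt, huniq⟩ q h0
    rw [hq] at this
    simp at this
  have hlt := q.isLt
  have h1 : 2 * ((q : ℕ) / 2) < H.length := by omega
  have h2 : 2 * ((q : ℕ) / 2) + 1 < H.length := by omega
  obtain ⟨hinv, _, hopb⟩ := halt ((q : ℕ) / 2) h1 h2
  have hqeq : q = ⟨2 * ((q : ℕ) / 2) + 1, h2⟩ := Fin.ext (by simp only [Fin.val_mk]; omega)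
  have key : (⟨2 * ((q : ℕ) / 2), h1⟩ : Fin H.length) = p := by
    apply huniq
    · rw [hopb, ← hqeq, ← hop]
    · rw [hinv, hp]
  have := congrArg Fin.val key
  simp only [Fin.val_mk] at this
  omega

lemma le_of_fin_strictMono {n n' : ℕ} (f : Fin n → Fin n')
    (hf : ∀ i j : Fin n, (i : ℕ) < (j : ℕ) → (f i : ℕ) < (f j : ℕ)) :
    ∀ i : Fin n, (i : ℕ) ≤ (f i : ℕ) := by
  intro i
  obtain ⟨v, hv⟩ := i
  revert hv
  induction v with
  | zero => intro hv; exact Nat.zero_le _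
  | succ m ih =>
    intro hv
    have hm : m < n := Nat.lt_of_succ_lt hv
    have h1 := ih hm
    have h2 := hf ⟨m, hm⟩ ⟨m + 1, hv⟩ (by simp)
    simp only [Fin.val_mk] at h1 h2 ⊢
    omega

/-- For sequential histories related by linearizability, the happened-before
orders coincide; if moreover the happened-before order of `H` is total, `H = H'`. -/
theorem lin_seq_hb_eq (H H' : History) (h : Lin H H')
    (hs : SeqHist H) (hs' : SeqHist H') (hlen : H.length = H'.length) :
    (∀ o o', hb H o o' ↔ hb H' o o') ∧
    ((∀ o o', opOf H o → opOf H o' → o ≠ o' → hb H o o' ∨ hb H o' o) → H = H') := by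
  obtain ⟨hproj, ν, hval, hord⟩ := h
  -- the ν-image of an invocation is immediately followed by the image of the
  -- matching response
  have step : ∀ p q : Fin H.length, (H.get p).op = (H.get q).op →
      (H.get p).isInv = true → (H.get q).isInv = false →
      ((ν q : ℕ)) = (ν p : ℕ) + 1 := by
    intro p q hop hp hq
    apply seq_resp_succ hs' (ν p) (ν q)
    · rw [← hval, ← hval]; exact hop
    · rw [← hval]; exact hp
    · rw [← hval]; exact hq
  -- ν is strictly monotone
  have mono : ∀ i j : Fin H.length, (i : ℕ) < (j : ℕ) → (ν i : ℕ) < (ν j : ℕ) := by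
    intro i j hij
    obtain ⟨⟨n, hn⟩, halt, huniq⟩ := hs
    have hlti := i.isLt
    have hltj := j.isLt
    set k := (i : ℕ) / 2 with hk
    set m := (j : ℕ) / 2 with hm
    have h1k : 2 * k < H.length := by omega
    have h2k : 2 * k + 1 < H.length := by omega
    have h1m : 2 * m < H.length := by omega
    have h2m : 2 * m + 1 < H.length := by omega
    obtain ⟨hIk, hRk, hOk⟩ := halt k h1k h2k
    obtain ⟨hIm, hRm, hOm⟩ := halt m h1m h2m
    by_cases hkm : k = m
    · -- same block : i = 2k, j = 2k+1
      have hieq : i = ⟨2 * k, h1k⟩ := Fin.ext (by simp only [Fin.val_mk]; omega)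
      have hjeq : j = ⟨2 * k + 1, h2k⟩ := Fin.ext (by simp only [Fin.val_mk]; omega)
      have := step i j (by rw [hieq, hjeq]; exact hOk)
        (by rw [hieq]; exact hIk) (by rw [hjeq]; exact hRk)
      omega
    · have hkm' : k < m := by omega
      -- response of block k happens (in index order) before invocation of block m
      have hmid := hord ⟨2 * k + 1, h2k⟩ ⟨2 * m, h1m⟩
        (by simp only [Fin.val_mk]; omega) hRk hIm
      have hleft : (ν i : ℕ) ≤ (ν ⟨2 * k + 1, h2k⟩ : ℕ) := by
        rcases Nat.even_or_odd (i : ℕ) with he | ho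
        · have hieq : i = ⟨2 * k, h1k⟩ := Fin.ext (by
            have := Nat.even_iff.mp he; simp only [Fin.val_mk]; omega)
          have := step i ⟨2 * k + 1, h2k⟩ (by rw [hieq]; exact hOk)
            (by rw [hieq]; exact hIk) hRk
          omega
        · have hieq : i = ⟨2 * k + 1, h2k⟩ := Fin.ext (by
            have := Nat.odd_iff.mp ho; simp only [Fin.val_mk]; omega)
          rw [hieq]
      have hright : (ν ⟨2 * m, h1m⟩ : ℕ) ≤ (ν j : ℕ) := by
        rcases Nat.even_or_odd (j : ℕ) with he | ho
        · have hjeq : j = ⟨2 * m, h1m⟩ := Fin.ext (by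
            have := Nat.even_iff.mp he; simp only [Fin.val_mk]; omega)
          rw [hjeq]
        · have hjeq : j = ⟨2 * m + 1, h2m⟩ := Fin.ext (by
            have := Nat.odd_iff.mp ho; simp only [Fin.val_mk]; omega)
          have := step ⟨2 * m, h1m⟩ j (by rw [hjeq]; exact hOm)
            hIm (by rw [hjeq]; exact hRm)
          omega
      omega
  -- hence ν is the identity
  have mono' : ∀ p q : Fin H'.length, (p : ℕ) < (q : ℕ) →
      (ν.symm p : ℕ) < (ν.symm q : ℕ) := by
    intro p q hpq
    rcases lt_trichotomy ((ν.symm p : ℕ)) ((ν.symm q : ℕ)) with h | h | h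
    · exact h
    · exfalso
      have : ν.symm p = ν.symm q := Fin.ext h
      have : p = q := by
        have := congrArg ν this
        simpa using this
      omega
    · exfalso
      have := mono _ _ h
      simp [Equiv.apply_symm_apply] at this
      omega
  have hle := le_of_fin_strictMono (⇑ν) mono
  have hle' := le_of_fin_strictMono (⇑ν.symm) mono'
  have hid : ∀ i : Fin H.length, (ν i : ℕ) = (i : ℕ) := by
    intro i
    have h1 := hle i
    have h2 := hle' (ν i)
    simp only [Equiv.symm_apply_apply] at h2
    omega
  have hEq : H = H' := by
    apply List.ext_get hlen
    intro t h1 h2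
    have : ν ⟨t, h1⟩ = ⟨t, h2⟩ := Fin.ext (hid ⟨t, h1⟩)
    rw [hval ⟨t, h1⟩, this]
  subst hEq
  exact ⟨fun o o' => Iff.rfl, fun _ => rfl⟩
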